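/- arXiv:2103.15291 — 2 statements merged into one kernel-verified Lean document; each statement's English description precedes it below -/
import Mathlib

section
/- For integers n ≥ r ≥ 1, an integer k, and 1 ≤ i ≤ n, the identity s(n,i) = ∑_{ℓ=1}^{r} s(r,ℓ) ∑_{j=1}^{n-r+2} (-1)^{ℓ+j-i} C(ℓ+j-2, i) · s_r(n+1, r+j-1) holds, where s denotes unsigned Stirling numbers of the first kind and s_r unsigned r-Stirling numbers of the first kind. -/
open Finset

/-- Unsigned Stirling numbers of the first kind. -/
def stirling1 : ℕ → ℕ → ℕ
  | 0, 0 => 1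
  | 0, _ + 1 => 0
  | _ + 1, 0 => 0
  | n + 1, k + 1 => n * stirling1 n (k + 1) + stirling1 n k

/-- Stirling numbers of the second kind. -/
def stirling2 : ℕ → ℕ → ℕ
  | 0, 0 => 1
  | 0, _ + 1 => 0
  | _ + 1, 0 => 0
  | n + 1, k + 1 => (k + 1) * stirling2 n (k + 1) + stirling2 n k

/-- Unsigned r-Stirling numbers of the first kind. -/
def rStirling1 (r : ℕ) : ℕ → ℕ → ℕ
  | 0, m => if r = 0 ∧ m = 0 then 1 else 0
  | n + 1, m =>
    if n + 1 < r then 0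
    else if n + 1 = r then (if m = r then 1 else 0)
    else n * rStirling1 r n m + (match m with | 0 => 0 | m' + 1 => rStirling1 r n m')

/-- r-Stirling numbers of the second kind. -/
def rStirling2 (r : ℕ) : ℕ → ℕ → ℕ
  | 0, m => if r = 0 ∧ m = 0 then 1 else 0
  | n + 1, m =>
    if n + 1 < r then 0
    else if n + 1 = r then (if m = r then 1 else 0)
    else m * rStirling2 r n m + (match m with | 0 => 0 | m' + 1 => rStirling2 r n m')

/-- Poly-Cauchy numbers of the first kind `c_n^{(k)}`. -/
noncomputable def polyCauchy (k : ℤ) (n : ℕ) : ℝ :=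
  ∑ ℓ ∈ range (n + 1), (-1 : ℝ) ^ (n - ℓ) * stirling1 n ℓ / ((ℓ : ℝ) + 1) ^ k

/-- Poly-Cauchy numbers of the second kind `ĉ_n^{(k)}`. -/
noncomputable def polyCauchy2 (k : ℤ) (n : ℕ) : ℝ :=
  (-1 : ℝ) ^ n * ∑ ℓ ∈ range (n + 1), (stirling1 n ℓ : ℝ) / ((ℓ : ℝ) + 1) ^ k

/-- Poly-Cauchy polynomials of the first kind `c_n^{(k)}(z)`. -/
noncomputable def polyCauchyPoly (k : ℤ) (n : ℕ) (z : ℝ) : ℝ :=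
  ∑ m ∈ range (n + 1), (stirling1 n m : ℝ) * (-1 : ℝ) ^ (n - m) *
    ∑ i ∈ range (m + 1), (m.choose i : ℝ) * z ^ (m - i) / ((i : ℝ) + 1) ^ k

/-- Shifted poly-Cauchy numbers of the first kind `c_{n,α}^{(k)}`. -/
noncomputable def shiftedPolyCauchy (k : ℤ) (n : ℕ) (α : ℝ) : ℝ :=
  ∑ m ∈ range (n + 1), (stirling1 n m : ℝ) * (-1 : ℝ) ^ (n - m) / ((m : ℝ) + α) ^ k

/-- Shifted poly-Cauchy numbers of the second kind `ĉ_{n,α}^{(k)}`. -/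
noncomputable def shiftedPolyCauchy2 (k : ℤ) (n : ℕ) (α : ℝ) : ℝ :=
  (-1 : ℝ) ^ n * ∑ m ∈ range (n + 1), (stirling1 n m : ℝ) / ((m : ℝ) + α) ^ k

section AuxSec
open Polynomial


lemma stirling1_succ (n m : ℕ) :
    stirling1 (n+1) (m+1) = n * stirling1 n (m+1) + stirling1 n m := rfl

lemma stirling1_succ_zero (n : ℕ) : stirling1 (n+1) 0 = 0 := rfl

lemma stirling1_eq_zero_of_lt : ∀ {n m : ℕ}, n < m → stirling1 n m = 0
  | 0, _+1, _ => rfl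
  | n+1, m+1, h => by
    rw [stirling1_succ, stirling1_eq_zero_of_lt (show n < m+1 by omega),
      stirling1_eq_zero_of_lt (show n < m by omega)]; simp

lemma stirling1_gen {R : Type*} [CommRing R] (n : ℕ) (x : R) :
    ∑ i ∈ range (n+1), (stirling1 n i : R) * x ^ i = ∏ t ∈ range n, (x + (t : R)) := by
  induction n with
  | zero => simp [stirling1]
  | succ n ih =>
    have hz : (n : R) * (stirling1 n 0 : R) = 0 := by
      cases n <;> simp [stirling1]
    have h1 := Finset.sum_range_succ' (fun i => (stirling1 n i : R) * x ^ i) (n+1)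
    have h2 := Finset.sum_range_succ (fun i => (stirling1 n i : R) * x ^ i) (n+1)
    rw [stirling1_eq_zero_of_lt (show n < n+1 by omega)] at h2
    have hB : ∑ i ∈ range (n+1), (stirling1 n (i+1) : R) * x ^ (i+1)
        = (∑ i ∈ range (n+1), (stirling1 n i : R) * x ^ i) - (stirling1 n 0 : R) := by
      simp only [pow_zero, mul_one, Nat.cast_zero, zero_mul, add_zero] at h1 h2
      linear_combination h2 - h1
    rw [Finset.sum_range_succ' (fun i => (stirling1 (n+1) i : R) * x ^ i) (n+1)]
    simp only [stirling1_succ, stirling1_succ_zero, Nat.cast_zero, zero_mul, add_zero,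
      Nat.cast_add, Nat.cast_mul, add_mul, mul_assoc]
    rw [Finset.sum_add_distrib, ← Finset.mul_sum, hB]
    have hx : ∑ i ∈ range (n+1), (stirling1 n i : R) * x ^ (i+1)
        = x * ∑ i ∈ range (n+1), (stirling1 n i : R) * x ^ i := by
      rw [Finset.mul_sum]; congr 1; ext i; ring
    rw [hx, ih, Finset.prod_range_succ]
    rw [mul_sub]
    rw [show (n:R) * ((∏ t ∈ range n, (x + (t:R)))) - (n:R) * (stirling1 n 0 : R)
        + x * ∏ t ∈ range n, (x + (t:R))
        = (∏ t ∈ range n, (x + (t:R))) * (x + n) - (n:R) * (stirling1 n 0 : R) by ring, hz]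
    ring


lemma rStirling1_succ (r n : ℕ) (h : r ≤ n) (m : ℕ) :
    rStirling1 r (n+1) (m+1) = n * rStirling1 r n (m+1) + rStirling1 r n m := by
  rw [rStirling1.eq_3, if_neg (by omega), if_neg (by omega)]

lemma rStirling1_succ_zero (r n : ℕ) (h : r ≤ n) :
    rStirling1 r (n+1) 0 = n * rStirling1 r n 0 := by
  rw [rStirling1.eq_2, if_neg (by omega), if_neg (by omega)]; omega

lemma rStirling1_self (r m : ℕ) : rStirling1 r r m = if m = r then 1 else 0 := by
  cases r with
  | zero => rw [rStirling1.eq_1]; by_cases h : m = 0 <;> simp [h]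
  | succ r' =>
    cases m with
    | zero => rw [rStirling1.eq_2, if_neg (by omega), if_pos rfl]
    | succ m' => rw [rStirling1.eq_3, if_neg (by omega), if_pos rfl]

lemma rStirling1_eq_zero_of_lt_r : ∀ (r n m : ℕ), m < r → rStirling1 r n m = 0
  | r, 0, m, h => by rw [rStirling1.eq_1, if_neg (by omega)]
  | r, n+1, 0, h => by
    rcases lt_trichotomy (n+1) r with hc | hc | hc
    · rw [rStirling1.eq_2, if_pos hc]
    · rw [rStirling1.eq_2, if_neg (by omega), if_pos hc, if_neg (by omega)]
    · rw [rStirling1.eq_2, if_neg (by omega), if_neg (by omega),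
        rStirling1_eq_zero_of_lt_r r n 0 h]; omega
  | r, n+1, m'+1, h => by
    rcases lt_trichotomy (n+1) r with hc | hc | hc
    · rw [rStirling1.eq_3, if_pos hc]
    · rw [rStirling1.eq_3, if_neg (by omega), if_pos hc, if_neg (by omega)]
    · rw [rStirling1.eq_3, if_neg (by omega), if_neg (by omega),
        rStirling1_eq_zero_of_lt_r r n (m'+1) h,
        rStirling1_eq_zero_of_lt_r r n m' (by omega)]; omega

lemma rStirling1_eq_zero_of_gt : ∀ (r n m : ℕ), n < m → rStirling1 r n m = 0
  | r, 0, m, h => by rw [rStirling1.eq_1, if_neg (by omega)]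
  | r, n+1, 0, h => by omega
  | r, n+1, m'+1, h => by
    rcases lt_trichotomy (n+1) r with hc | hc | hc
    · rw [rStirling1.eq_3, if_pos hc]
    · rw [rStirling1.eq_3, if_neg (by omega), if_pos hc, if_neg (by omega)]
    · rw [rStirling1.eq_3, if_neg (by omega), if_neg (by omega),
        rStirling1_eq_zero_of_gt r n (m'+1) (by omega),
        rStirling1_eq_zero_of_gt r n m' (by omega)]; omega

lemma rStirling1_gen {R : Type*} [CommRing R] (r : ℕ) (hr : 1 ≤ r) (n : ℕ) (hn : r ≤ n)
    (x : R) :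
    ∑ m ∈ range (n+1), (rStirling1 r n m : R) * x ^ m
      = x ^ r * ∏ t ∈ Finset.Ico r n, (x + (t : R)) := by
  induction n, hn using Nat.le_induction with
  | base =>
    simp only [rStirling1_self]
    rw [Finset.sum_eq_single r]
    · simp
    · intro b _ hb; simp [hb]
    · intro h; exact absurd (Finset.self_mem_range_succ r) h
  | succ n hn ih =>
    have hz : (rStirling1 r n 0 : R) = 0 := by
      rw [rStirling1_eq_zero_of_lt_r r n 0 (by omega)]; simp
    have h1 := Finset.sum_range_succ' (fun m => (rStirling1 r n m : R) * x ^ m) (n+1)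
    have h2 := Finset.sum_range_succ (fun m => (rStirling1 r n m : R) * x ^ m) (n+1)
    rw [rStirling1_eq_zero_of_gt r n (n+1) (by omega)] at h2
    have hB : ∑ m ∈ range (n+1), (rStirling1 r n (m+1) : R) * x ^ (m+1)
        = ∑ m ∈ range (n+1), (rStirling1 r n m : R) * x ^ m := by
      simp only [pow_zero, mul_one, Nat.cast_zero, zero_mul, add_zero, hz] at h1 h2
      linear_combination h2 - h1
    rw [Finset.sum_range_succ' (fun m => (rStirling1 r (n+1) m : R) * x ^ m) (n+1)]
    simp only [rStirling1_succ r n hn, rStirling1_succ_zero r n hn, Nat.cast_add,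
      Nat.cast_mul, add_mul, mul_assoc, hz, pow_zero, mul_one, mul_zero]
    rw [Finset.sum_add_distrib, ← Finset.mul_sum, hB]
    have hx : ∑ m ∈ range (n+1), (rStirling1 r n m : R) * x ^ (m+1)
        = x * ∑ m ∈ range (n+1), (rStirling1 r n m : R) * x ^ m := by
      rw [Finset.mul_sum]; congr 1; ext m; ring
    rw [hx, ih, Finset.prod_Ico_succ_top hn]
    ring

lemma coeff_X_sub_one_pow (m i : ℕ) :
    ((X - 1 : Polynomial ℤ) ^ m).coeff i = (-1 : ℤ) ^ (m + i) * m.choose i := by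
  have h : (X - 1 : Polynomial ℤ) = X + C (-1) := by rw [map_neg, map_one]; ring
  rw [h, coeff_X_add_C_pow]
  rcases le_or_gt i m with h' | h'
  · have : m + i = (m - i) + 2 * i := by omega
    rw [this, pow_add, pow_mul]
    norm_num
  · simp [Nat.choose_eq_zero_of_lt h']



theorem stmt10 (n r i : ℕ) (k : ℤ) (hr : 1 ≤ r) (hn : r ≤ n) (hi : 1 ≤ i)
    (hi' : i ≤ n) :
    (stirling1 n i : ℤ) =
      ∑ ℓ ∈ Finset.Icc 1 r, (stirling1 r ℓ : ℤ) *
        ∑ j ∈ Finset.Icc 1 (n - r + 2), (-1 : ℤ) ^ (ℓ + j + i) *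
          ((ℓ + j - 2).choose i : ℤ) * (rStirling1 r (n + 1) (r + j - 1) : ℤ) := by
  have hy0 : (X - 1 : Polynomial ℤ) ≠ 0 := fun h => by
    simpa [Polynomial.coeff_one] using congrArg (fun p => Polynomial.coeff p 1) h
  -- P = x(x+1)...(x+r-2)
  have hP : (∑ ℓ ∈ Finset.Icc 1 r, C ((stirling1 r ℓ : ℤ)) * (X - 1) ^ (ℓ - 1))
      = ∏ t ∈ range (r - 1), (X + (t : Polynomial ℤ)) := by
    apply mul_left_cancel₀ hy0
    calc (X - 1) * (∑ ℓ ∈ Finset.Icc 1 r, C ((stirling1 r ℓ : ℤ)) * (X - 1) ^ (ℓ - 1))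
        = ∑ ℓ ∈ Finset.Icc 1 r, (stirling1 r ℓ : Polynomial ℤ) * (X - 1) ^ ℓ := by
          rw [Finset.mul_sum]
          apply Finset.sum_congr rfl
          intro ℓ hℓ
          have h1 : 1 ≤ ℓ := (Finset.mem_Icc.mp hℓ).1
          rw [show (X - 1 : Polynomial ℤ) * (C ((stirling1 r ℓ : ℤ)) * (X - 1) ^ (ℓ - 1))
              = C ((stirling1 r ℓ : ℤ)) * ((X - 1) ^ (ℓ - 1) * (X - 1)) by ring,
            ← pow_succ, show ℓ - 1 + 1 = ℓ by omega, map_natCast]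
      _ = ∑ ℓ ∈ range (r + 1), (stirling1 r ℓ : Polynomial ℤ) * (X - 1) ^ ℓ := by
          apply Finset.sum_subset
          · intro x hx
            simp only [Finset.mem_Icc, Finset.mem_range] at *
            omega
          · intro x hx hnx
            have hx0 : x = 0 := by
              simp only [Finset.mem_Icc, Finset.mem_range] at *
              omega
            subst hx0
            obtain ⟨r', rfl⟩ : ∃ r', r = r' + 1 := ⟨r - 1, by omega⟩
            simp [stirling1_succ_zero]
      _ = ∏ t ∈ range r, ((X - 1 : Polynomial ℤ) + (t : Polynomial ℤ)) := stirling1_gen r (X - 1)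
      _ = (X - 1) * ∏ t ∈ range (r - 1), (X + (t : Polynomial ℤ)) := by
          obtain ⟨r', rfl⟩ : ∃ r', r = r' + 1 := ⟨r - 1, by omega⟩
          rw [Finset.prod_range_succ']
          simp only [Nat.cast_zero, add_zero, Nat.add_sub_cancel]
          rw [mul_comm]
          congr 1
          apply Finset.prod_congr rfl
          intro t _
          push_cast
          ring
  -- Q = (x+r-1)(x+r)...(x+n-1)
  have hsum2 : ∑ m ∈ range (n + 2), (rStirling1 r (n + 1) m : Polynomial ℤ) * (X - 1) ^ m
      = ∑ j' ∈ range (n - r + 2), (rStirling1 r (n + 1) (r + j') : Polynomial ℤ) * (X - 1) ^ (r + j') := by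
    rw [Finset.range_eq_Ico,
      ← Finset.sum_Ico_consecutive _ (Nat.zero_le r) (show r ≤ n + 2 by omega)]
    have hz : ∑ m ∈ Finset.Ico 0 r, (rStirling1 r (n + 1) m : Polynomial ℤ) * (X - 1) ^ m = 0 := by
      apply Finset.sum_eq_zero
      intro m hm
      rw [rStirling1_eq_zero_of_lt_r r (n + 1) m (Finset.mem_Ico.mp hm).2]
      simp
    rw [hz, zero_add, Finset.sum_Ico_eq_sum_range, show n + 2 - r = n - r + 2 by omega,
      Finset.range_eq_Ico]
  have hQ : (∑ j ∈ Finset.Icc 1 (n - r + 2),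
        C ((rStirling1 r (n + 1) (r + j - 1) : ℤ)) * (X - 1) ^ (j - 1))
      = ∏ t ∈ Finset.Ico (r - 1) n, (X + (t : Polynomial ℤ)) := by
    apply mul_left_cancel₀ (pow_ne_zero r hy0)
    calc (X - 1) ^ r * (∑ j ∈ Finset.Icc 1 (n - r + 2),
            C ((rStirling1 r (n + 1) (r + j - 1) : ℤ)) * (X - 1) ^ (j - 1))
        = ∑ j' ∈ range (n - r + 2), (rStirling1 r (n + 1) (r + j') : Polynomial ℤ) * (X - 1) ^ (r + j') := by
          rw [Finset.mul_sum,
            show Finset.Icc 1 (n - r + 2) = Finset.Ico 1 (n - r + 2 + 1) from (Finset.Ico_add_one_right_eq_Icc ..).symm,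
            Finset.sum_Ico_eq_sum_range, show n - r + 2 + 1 - 1 = n - r + 2 by omega]
          apply Finset.sum_congr rfl
          intro j' _
          rw [show 1 + j' - 1 = j' by omega, show r + (1 + j') - 1 = r + j' by omega,
            map_natCast, pow_add]
          ring
      _ = ∑ m ∈ range (n + 2), (rStirling1 r (n + 1) m : Polynomial ℤ) * (X - 1) ^ m := hsum2.symm
      _ = (X - 1) ^ r * ∏ t ∈ Finset.Ico r (n + 1), ((X - 1 : Polynomial ℤ) + (t : Polynomial ℤ)) :=
          rStirling1_gen r hr (n + 1) (by omega) (X - 1)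
      _ = (X - 1) ^ r * ∏ t ∈ Finset.Ico (r - 1) n, (X + (t : Polynomial ℤ)) := by
          congr 1
          rw [Finset.prod_Ico_eq_prod_range, Finset.prod_Ico_eq_prod_range,
            show n + 1 - r = n - (r - 1) by omega]
          apply Finset.prod_congr rfl
          intro s _
          have h1 : ((r - 1 + s : ℕ) : Polynomial ℤ) = (r : Polynomial ℤ) - 1 + (s : Polynomial ℤ) := by
            push_cast [Nat.cast_sub hr]
            ring
          rw [h1]
          push_cast
          ring
  -- product split
  have hsplit : (∏ t ∈ range (r - 1), (X + (t : Polynomial ℤ))) *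
        (∏ t ∈ Finset.Ico (r - 1) n, (X + (t : Polynomial ℤ)))
      = ∏ t ∈ range n, (X + (t : Polynomial ℤ)) := by
    rw [Finset.range_eq_Ico, Finset.range_eq_Ico]
    exact Finset.prod_Ico_consecutive (fun t : ℕ => X + (t : Polynomial ℤ)) (Nat.zero_le _) (show r - 1 ≤ n by omega)
  -- coefficient extraction of LHS
  have hL : (stirling1 n i : ℤ) = (∏ t ∈ range n, (X + (t : Polynomial ℤ))).coeff i := by
    rw [← stirling1_gen n (X : Polynomial ℤ), Polynomial.finset_sum_coeff]
    have h : ∀ i' ∈ range (n + 1), ((stirling1 n i' : Polynomial ℤ) * X ^ i').coeff i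
        = if i = i' then (stirling1 n i' : ℤ) else 0 := by
      intro i' _
      rw [← map_natCast (Polynomial.C : ℤ →+* Polynomial ℤ), Polynomial.coeff_C_mul,
        Polynomial.coeff_X_pow]
      split <;> simp
    rw [Finset.sum_congr rfl h, Finset.sum_ite_eq]
    simp [show i < n + 1 by omega]
  -- RHS as a coefficient
  have hRHS : (∑ ℓ ∈ Finset.Icc 1 r, (stirling1 r ℓ : ℤ) *
        ∑ j ∈ Finset.Icc 1 (n - r + 2), (-1 : ℤ) ^ (ℓ + j + i) *
          ((ℓ + j - 2).choose i : ℤ) * (rStirling1 r (n + 1) (r + j - 1) : ℤ))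
      = ((∑ ℓ ∈ Finset.Icc 1 r, C ((stirling1 r ℓ : ℤ)) * (X - 1) ^ (ℓ - 1)) *
         (∑ j ∈ Finset.Icc 1 (n - r + 2),
            C ((rStirling1 r (n + 1) (r + j - 1) : ℤ)) * (X - 1) ^ (j - 1))).coeff i := by
    rw [Finset.sum_mul_sum, Polynomial.finset_sum_coeff]
    apply Finset.sum_congr rfl
    intro ℓ hℓ
    rw [Polynomial.finset_sum_coeff, Finset.mul_sum]
    apply Finset.sum_congr rfl
    intro j hj
    have h1 : 1 ≤ ℓ := (Finset.mem_Icc.mp hℓ).1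
    have h2 : 1 ≤ j := (Finset.mem_Icc.mp hj).1
    rw [show (C ((stirling1 r ℓ : ℤ)) * (X - 1) ^ (ℓ - 1)) *
          (C ((rStirling1 r (n + 1) (r + j - 1) : ℤ)) * (X - 1) ^ (j - 1))
        = C ((stirling1 r ℓ : ℤ) * (rStirling1 r (n + 1) (r + j - 1) : ℤ)) *
          (X - 1) ^ (ℓ - 1 + (j - 1)) by rw [map_mul, pow_add]; ring,
      Polynomial.coeff_C_mul, coeff_X_sub_one_pow,
      show ℓ - 1 + (j - 1) = ℓ + j - 2 by omega,
      show ℓ + j + i = (ℓ + j - 2 + i) + 2 by omega, pow_add]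
    ring
  rw [hRHS, hP, hQ, hsplit]
  exact hL

end AuxSec
end

section
/- (Annihilation formula) For integers n, k with n ≥ k+2, ∑_{l=0}^{k} S_{n-k-1}(n-1, n-l-1) · c_{n-l}^{(-k)} = 0, where S_r denotes r-Stirling numbers of the second kind and c_m^{(-k)} the poly-Cauchy numbers of the first kind with negative index. -/
open Finset

open Polynomial

lemma stirling1_eq_zero : ∀ m ℓ : ℕ, m < ℓ → stirling1 m ℓ = 0 := by
  intro m
  induction m with
  | zero => intro ℓ hℓ; cases ℓ with
    | zero => omega
    | succ ℓ => rfl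
  | succ m ih =>
    intro ℓ hℓ
    cases ℓ with
    | zero => omega
    | succ ℓ =>
      show m * stirling1 m (ℓ+1) + stirling1 m ℓ = 0
      rw [ih (ℓ+1) (by omega), ih ℓ (by omega)]
      simp

lemma rStirling2_succ_zero (r n : ℕ) (h : r ≤ n) :
    rStirling2 r (n + 1) 0 = 0 := by
  show (if n + 1 < r then _ else if n + 1 = r then _ else _) = 0
  rw [if_neg (by omega), if_neg (by omega)]
  simp

lemma rStirling2_succ_succ (r n m : ℕ) (h : r ≤ n) :
    rStirling2 r (n + 1) (m + 1)
      = (m + 1) * rStirling2 r n (m + 1) + rStirling2 r n m := by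
  show (if n + 1 < r then _ else if n + 1 = r then _ else _) = _
  rw [if_neg (by omega), if_neg (by omega)]

lemma rStirling2_diag (r m : ℕ) :
    rStirling2 r r m = if m = r then 1 else 0 := by
  cases r with
  | zero => show (if 0 = 0 ∧ m = 0 then 1 else 0) = _; simp
  | succ s =>
    show (if s + 1 < s + 1 then _ else if s + 1 = s + 1 then _ else _) = _
    rw [if_neg (by omega), if_pos rfl]

lemma rStirling2_eq_zero_of_gt (r : ℕ) : ∀ n m : ℕ, n < m → rStirling2 r n m = 0 := by
  intro n
  induction n with
  | zero =>
    intro m hm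
    show (if r = 0 ∧ m = 0 then 1 else 0) = 0
    rw [if_neg (by omega)]
  | succ n ih =>
    intro m hm
    show (if n + 1 < r then _ else if n + 1 = r then _ else _) = 0
    split
    · rfl
    · split
      · rw [if_neg (by omega)]
      · cases m with
        | zero => omega
        | succ m' =>
          show (m' + 1) * rStirling2 r n (m' + 1) + rStirling2 r n m' = 0
          rw [ih (m' + 1) (by omega), ih m' (by omega)]
          simp

lemma rStirling2_eq_zero_of_lt (r : ℕ) : ∀ n m : ℕ, m < r → rStirling2 r n m = 0 := by
  intro n
  induction n with
  | zero =>
    intro m hm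
    show (if r = 0 ∧ m = 0 then 1 else 0) = 0
    rw [if_neg (by omega)]
  | succ n ih =>
    intro m hm
    show (if n + 1 < r then _ else if n + 1 = r then _ else _) = 0
    split
    · rfl
    · split
      · rw [if_neg (by omega)]
      · cases m with
        | zero =>
          show 0 * rStirling2 r n 0 + 0 = 0
          simp
        | succ m' =>
          show (m' + 1) * rStirling2 r n (m' + 1) + rStirling2 r n m' = 0
          rw [ih (m' + 1) (by omega), ih m' (by omega)]
          simp

noncomputable def T : Module.End ℝ (Polynomial ℝ) :=
  (Polynomial.derivative : ℝ[X] →ₗ[ℝ] ℝ[X]) ∘ₗ LinearMap.mulLeft ℝ (X : ℝ[X])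

lemma T_apply (p : ℝ[X]) : T p = derivative (X * p) := rfl

lemma T_pow_X_pow (k ℓ : ℕ) : (T ^ k) (X ^ ℓ : ℝ[X]) = (((ℓ : ℝ) + 1) ^ k) • X ^ ℓ := by
  induction k with
  | zero => simp
  | succ k ih =>
    rw [pow_succ, Module.End.mul_apply]
    have h1 : T (X ^ ℓ : ℝ[X]) = ((ℓ : ℝ) + 1) • X ^ ℓ := by
      rw [T_apply, ← pow_succ', derivative_X_pow, smul_eq_C_mul]
      push_cast
      simp
    rw [h1, map_smul, ih, smul_smul, ← pow_succ']

lemma T_pow_annihilate (k : ℕ) (G : ℝ[X]) :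
    ∃ H : ℝ[X], (T ^ k) ((X - 1) ^ (k + 1) * G) = (X - 1) * H := by
  induction k generalizing G with
  | zero => exact ⟨G, by simp⟩
  | succ k ih =>
    have h1 : T ((X - 1 : ℝ[X]) ^ (k + 2) * G) = (X - 1) ^ (k + 1) *
        ((X - 1) * G + (C ((k : ℝ) + 2)) * (X * G) + X * (X - 1) * derivative G) := by
      rw [T_apply]
      simp only [derivative_mul, derivative_pow, derivative_X, derivative_sub, derivative_one,
        Nat.add_sub_cancel]
      push_cast
      ring
    rw [pow_succ, Module.End.mul_apply, h1]
    exact ih _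

lemma descPochhammer_eq_sum (m : ℕ) :
    descPochhammer ℝ m
      = ∑ ℓ ∈ range (m + 1), ((-1 : ℝ) ^ m * (-1) ^ ℓ * stirling1 m ℓ) • X ^ ℓ := by
  induction m with
  | zero => simp [stirling1]
  | succ m ih =>
    rw [descPochhammer_succ_right, ih, Finset.sum_mul]
    have hterm : ∀ ℓ, (((-1 : ℝ) ^ m * (-1) ^ ℓ * stirling1 m ℓ) • X ^ ℓ) * (X - (m : ℝ[X]))
        = ((-1 : ℝ) ^ m * (-1) ^ ℓ * stirling1 m ℓ) • X ^ (ℓ + 1)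
          - ((m : ℝ) * ((-1 : ℝ) ^ m * (-1) ^ ℓ * stirling1 m ℓ)) • X ^ ℓ := by
      intro ℓ
      simp only [smul_eq_C_mul, ← Polynomial.C_eq_natCast]
      push_cast
      simp only [map_mul, map_pow, map_neg, map_one, map_natCast]
      ring
    rw [Finset.sum_congr rfl fun ℓ _ => hterm ℓ, Finset.sum_sub_distrib]
    -- RHS: peel off the ℓ = 0 term
    rw [Finset.sum_range_succ' (fun ℓ => ((-1 : ℝ) ^ (m+1) * (-1) ^ ℓ * stirling1 (m+1) ℓ) • X ^ ℓ)]
    have h0 : (((-1 : ℝ) ^ (m+1) * (-1) ^ 0 * stirling1 (m+1) 0) • X ^ 0 : ℝ[X]) = 0 := by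
      show (((-1 : ℝ) ^ (m+1) * (-1) ^ 0 * (0:ℕ)) • X ^ 0 : ℝ[X]) = 0
      simp
    rw [h0, add_zero]
    -- now handle the second sum on LHS: shift index
    have hB : ∑ ℓ ∈ range (m + 1), ((m : ℝ) * ((-1 : ℝ) ^ m * (-1) ^ ℓ * stirling1 m ℓ)) • (X:ℝ[X]) ^ ℓ
        = ∑ ℓ ∈ range (m + 1), ((m : ℝ) * ((-1 : ℝ) ^ m * (-1) ^ (ℓ+1) * stirling1 m (ℓ+1))) • (X:ℝ[X]) ^ (ℓ+1) := by
      rw [Finset.sum_range_succ' (fun ℓ => ((m : ℝ) * ((-1 : ℝ) ^ m * (-1) ^ ℓ * stirling1 m ℓ)) • (X:ℝ[X]) ^ ℓ)]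
      rw [Finset.sum_range_succ (fun ℓ => ((m : ℝ) * ((-1 : ℝ) ^ m * (-1) ^ (ℓ+1) * stirling1 m (ℓ+1))) • (X:ℝ[X]) ^ (ℓ+1))]
      have hz1 : ((m : ℝ) * ((-1 : ℝ) ^ m * (-1) ^ 0 * stirling1 m 0)) • (X:ℝ[X]) ^ 0 = 0 := by
        cases m with
        | zero => simp
        | succ m => show ((_ : ℝ) * (_ * _ * ((0:ℕ):ℝ))) • _ = 0; simp
      have hz2 : ((m : ℝ) * ((-1 : ℝ) ^ m * (-1) ^ (m+1) * stirling1 m (m+1))) • (X:ℝ[X]) ^ (m+1) = 0 := by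
        rw [stirling1_eq_zero m (m+1) (by omega)]; simp
      rw [hz1, hz2]
    rw [hB, ← Finset.sum_sub_distrib]
    refine Finset.sum_congr rfl fun ℓ _ => ?_
    have hrec : stirling1 (m+1) (ℓ+1) = m * stirling1 m (ℓ+1) + stirling1 m ℓ := rfl
    rw [hrec, ← sub_smul]
    congr 1
    push_cast
    ring

lemma broder (r : ℕ) : ∀ j : ℕ,
    ∑ m ∈ range (r + j + 1), (rStirling2 r (r + j) m : ℝ) • descPochhammer ℝ m
      = descPochhammer ℝ r * X ^ j := by
  intro j
  induction j with
  | zero =>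
    simp only [Nat.add_zero, pow_zero, mul_one]
    rw [Finset.sum_eq_single_of_mem r (by simp)]
    · rw [rStirling2_diag]; simp
    · intro b _ hb; rw [rStirling2_diag]; simp [hb]
  | succ j ih =>
    have hstep : r + (j + 1) = (r + j) + 1 := by omega
    rw [hstep]
    rw [Finset.sum_range_succ' (fun m => (rStirling2 r (r + j + 1) m : ℝ) • descPochhammer ℝ m)]
    rw [rStirling2_succ_zero r (r + j) (by omega)]
    set g : ℕ → ℝ[X] := fun m => ((m : ℝ) * (rStirling2 r (r + j) m : ℝ)) • descPochhammer ℝ m with hg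
    have hterm : ∀ i ∈ range (r + j + 1),
        (rStirling2 r (r + j + 1) (i + 1) : ℝ) • descPochhammer ℝ (i + 1)
          = (g (i + 1) - g i) + ((rStirling2 r (r + j) i : ℝ) • descPochhammer ℝ i) * X := by
      intro i _
      rw [rStirling2_succ_succ r (r + j) i (by omega)]
      simp only [hg, descPochhammer_succ_right]
      simp only [smul_eq_C_mul, ← Polynomial.C_eq_natCast]
      push_cast
      simp only [map_mul, map_pow, map_neg, map_one, map_natCast, map_add]
      ring
    rw [Finset.sum_congr rfl hterm, Finset.sum_add_distrib, Finset.sum_range_sub g]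
    have hgtop : g (r + j + 1) = 0 := by
      simp only [hg, rStirling2_eq_zero_of_gt r (r + j) (r + j + 1) (by omega)]
      simp
    have hg0 : g 0 = 0 := by simp only [hg]; simp
    rw [hgtop, hg0, ← Finset.sum_mul, ih]
    simp [pow_succ]
    ring

lemma polyCauchy_neg_eq (k m : ℕ) :
    polyCauchy (-(k : ℤ)) m = Polynomial.eval 1 ((T ^ k) (descPochhammer ℝ m)) := by
  rw [descPochhammer_eq_sum m, map_sum, Polynomial.eval_finset_sum, polyCauchy]
  refine Finset.sum_congr rfl fun ℓ hℓ => ?_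
  rw [map_smul, T_pow_X_pow, Polynomial.eval_smul, Polynomial.eval_smul, Polynomial.eval_pow,
    Polynomial.eval_X]
  have hle : ℓ ≤ m := by simpa using Nat.lt_succ_iff.mp (Finset.mem_range.mp hℓ)
  have hsgn : ((-1 : ℝ) ^ (m - ℓ)) = (-1 : ℝ) ^ m * (-1) ^ ℓ := by
    have h1 : (-1 : ℝ) ^ m = (-1 : ℝ) ^ (m - ℓ) * (-1) ^ ℓ := by
      rw [← pow_add, Nat.sub_add_cancel hle]
    have h2 : ((-1 : ℝ) ^ ℓ) * ((-1 : ℝ) ^ ℓ) = 1 := by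
      rw [← mul_pow]; norm_num
    rw [h1, mul_assoc, h2, mul_one]
  have hz : ((ℓ : ℝ) + 1) ^ (-(k : ℤ)) = (((ℓ : ℝ) + 1) ^ k)⁻¹ := by
    rw [zpow_neg, zpow_natCast]
  rw [hz, hsgn, div_eq_mul_inv, inv_inv]
  simp only [smul_eq_mul, one_pow]
  ring

theorem stmt17 (n k : ℕ) (h : k + 2 ≤ n) :
    ∑ l ∈ Finset.range (k + 1),
        (rStirling2 (n - k - 1) (n - 1) (n - l - 1) : ℝ) * polyCauchy (-(k : ℤ)) (n - l) =
      0 := by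
  obtain ⟨m, rfl⟩ : ∃ m, n = m + k + 2 := ⟨n - k - 2, by omega⟩
  rw [← Finset.sum_range_reflect]
  have hcongr : ∀ l ∈ range (k + 1),
      (rStirling2 (m + k + 2 - k - 1) (m + k + 2 - 1) (m + k + 2 - (k + 1 - 1 - l) - 1) : ℝ) *
          polyCauchy (-(k : ℤ)) (m + k + 2 - (k + 1 - 1 - l))
        = Polynomial.eval 1 ((T ^ k)
            ((rStirling2 (m + 1) (m + k + 1) (m + 1 + l) : ℝ) • descPochhammer ℝ (m + 2 + l))) := by
    intro l hl
    have hlk : l ≤ k := by simpa using Nat.lt_succ_iff.mp (Finset.mem_range.mp hl)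
    have e1 : m + k + 2 - k - 1 = m + 1 := by omega
    have e2 : m + k + 2 - 1 = m + k + 1 := by omega
    have e3 : m + k + 2 - (k + 1 - 1 - l) - 1 = m + 1 + l := by omega
    have e4 : m + k + 2 - (k + 1 - 1 - l) = m + 2 + l := by omega
    rw [e1, e2, e3, e4, polyCauchy_neg_eq, map_smul, Polynomial.eval_smul, smul_eq_mul]
  rw [Finset.sum_congr rfl hcongr, ← Polynomial.eval_finset_sum, ← map_sum]
  -- now compute the inner polynomial sum
  set F : ℝ[X] := ∑ l ∈ range (k + 1),
      (rStirling2 (m + 1) (m + k + 1) (m + 1 + l) : ℝ) • descPochhammer ℝ (m + 2 + l) with hF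
  have hG0 : (∑ l ∈ range (k + 1),
      (rStirling2 (m + 1) (m + k + 1) (m + 1 + l) : ℝ) • descPochhammer ℝ (m + 1 + l))
        = descPochhammer ℝ (m + 1) * X ^ k := by
    have hb := broder (m + 1) k
    rw [show m + 1 + k + 1 = (m + 1) + (k + 1) by omega] at hb
    rw [Finset.sum_range_add (fun j => (rStirling2 (m + 1) (m + 1 + k) j : ℝ) • descPochhammer ℝ j)
      (m + 1) (k + 1)] at hb
    have hzero : ∑ j ∈ range (m + 1),
        (rStirling2 (m + 1) (m + 1 + k) j : ℝ) • descPochhammer ℝ j = 0 := by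
      refine Finset.sum_eq_zero fun j hj => ?_
      rw [rStirling2_eq_zero_of_lt (m + 1) (m + 1 + k) j
        (by simpa using Finset.mem_range.mp hj)]
      simp
    rw [hzero, zero_add] at hb
    rw [show m + 1 + k = m + k + 1 by omega] at hb
    exact hb
  have hFfact : F = (X - 1) ^ (k + 1) *
      (X * (((descPochhammer ℝ m).comp (X - 1)).comp (X - 1))) := by
    rw [hF]
    have hstep : ∀ l, descPochhammer ℝ (m + 2 + l)
        = X * (descPochhammer ℝ (m + 1 + l)).comp (X - 1) := by
      intro l
      rw [show m + 2 + l = (m + 1 + l) + 1 by omega, descPochhammer_succ_left]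
    rw [Finset.sum_congr rfl fun l _ => by rw [hstep l]]
    have hmul : ∀ (c : ℝ) (p : ℝ[X]), c • (X * p.comp (X - 1)) = X * ((c • p).comp (X - 1)) := by
      intro c p
      rw [Polynomial.smul_comp, mul_smul_comm]
    rw [Finset.sum_congr rfl fun l _ => hmul _ _, ← Finset.mul_sum]
    have hsumcomp : ∑ l ∈ range (k + 1),
        ((rStirling2 (m + 1) (m + k + 1) (m + 1 + l) : ℝ) • descPochhammer ℝ (m + 1 + l)).comp (X - 1)
          = ((descPochhammer ℝ (m + 1) * X ^ k)).comp (X - 1) := by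
      rw [← hG0]
      simp only [Polynomial.comp, Polynomial.eval₂_finset_sum]
    rw [hsumcomp, Polynomial.mul_comp, Polynomial.pow_comp, Polynomial.X_comp,
      descPochhammer_succ_left, Polynomial.mul_comp, Polynomial.X_comp]
    ring
  obtain ⟨H, hH⟩ := T_pow_annihilate k (X * (((descPochhammer ℝ m).comp (X - 1)).comp (X - 1)))
  rw [hFfact, hH]
  simp
end
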